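/- Let G be a GSWF on n voters and m₁+m₂ alternatives satisfying IIA. Partition the alternatives into a set S₁ of size m₁ and S₂ of size m₂, and let G₁, G₂ be the restrictions of G to S₁, S₂. Then the events 'G₁ has no Generalized Condorcet Winner' and 'G₂ has no Generalized Condorcet Winner' are independent under the uniform distribution on profiles, and Pr[G has no GCW] ≥ Pr[G₁ has no GCW] · Pr[G₂ has no GCW]. -/

import Mathlib

open Finset
open scoped Classical

/-- A linear order on `m` alternatives, represented by its ranking permutation:
`σ a` is the rank of alternative `a` (rank `0` is most preferred). -/
abbrev OrderM (m : ℕ) := Equiv.Perm (Fin m)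

/-- A profile of `n` voters on `m` alternatives. -/
abbrev ProfileM (n m : ℕ) := Fin n → OrderM m

/-- Voter with ranking `σ` prefers alternative `a` over alternative `b`. -/
def PrefersM (m : ℕ) (σ : OrderM m) (a b : Fin m) : Prop := σ a < σ b

/-- The column `x^{a,b} ∈ {0,1}ⁿ` of individual preferences between `a` and `b`. -/
noncomputable def colM (n m : ℕ) (x : ProfileM n m) (a b : Fin m) : Fin n → Bool :=
  fun i => decide (PrefersM m (x i) a b)

/-- The restriction of `G` to the set `S` of alternatives has no Generalized Condorcet
Winner at `x`. -/
def NoGCWin (n m : ℕ) (G : ProfileM n m → Fin m → Fin m → Bool) (S : Finset (Fin m))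
    (x : ProfileM n m) : Prop :=
  ¬ ∃ a ∈ S, ∀ b ∈ S, b ≠ a → G x a b = true

/-- Probability of an event under the uniform distribution on profiles. -/
noncomputable def Prob (n m : ℕ) (p : ProfileM n m → Prop) : ℝ :=
  ((univ.filter p).card : ℝ) / (Fintype.card (ProfileM n m) : ℝ)


section Voter
variable {m k₁ k₂ : ℕ} (s : Finset (Fin m)) (hs : s.card = k₁) (hsc : sᶜ.card = k₂)

noncomputable def rk (σ : Equiv.Perm (Fin m)) : Fin k₁ → Fin k₁ :=
  fun i => ((s.image σ).orderIsoOfFin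
      (by rw [Finset.card_image_of_injective _ σ.injective, hs])).symm
    ⟨σ (s.orderIsoOfFin hs i), Finset.mem_image_of_mem _ (Finset.coe_mem _)⟩

lemma rk_lt_rk (σ : Equiv.Perm (Fin m)) (i j : Fin k₁) :
    rk s hs σ i < rk s hs σ j ↔ σ (s.orderIsoOfFin hs i) < σ (s.orderIsoOfFin hs j) := by
  unfold rk
  rw [OrderIso.lt_iff_lt, Subtype.mk_lt_mk]

lemma rk_injective (σ : Equiv.Perm (Fin m)) : Function.Injective (rk s hs σ) := by
  intro i j h
  by_contra hne
  have hne' : (σ (s.orderIsoOfFin hs i) : Fin m) ≠ σ (s.orderIsoOfFin hs j) :=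
    σ.injective.ne (fun hc => hne ((s.orderIsoOfFin hs).injective (Subtype.coe_injective hc)))
  rcases hne'.lt_or_gt with h1 | h1
  · exact absurd h ((rk_lt_rk s hs σ i j).2 h1).ne
  · exact absurd h.symm ((rk_lt_rk s hs σ j i).2 h1).ne

noncomputable def rkPerm (σ : Equiv.Perm (Fin m)) : Equiv.Perm (Fin k₁) :=
  Equiv.ofBijective (rk s hs σ) (Finite.injective_iff_bijective.mp (rk_injective s hs σ))

@[simp] lemma rkPerm_apply (σ : Equiv.Perm (Fin m)) (i : Fin k₁) :
    rkPerm s hs σ i = rk s hs σ i := rfl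

/-- comparability: equal rank perms give same pairwise comparisons on `s`. -/
lemma rkPerm_compat (σ σ' : Equiv.Perm (Fin m)) (h : rkPerm s hs σ = rkPerm s hs σ')
    (a b : Fin m) (ha : a ∈ s) (hb : b ∈ s) : (σ a < σ b ↔ σ' a < σ' b) := by
  set e := s.orderIsoOfFin hs with he
  have hae : ((e (e.symm ⟨a, ha⟩) : s) : Fin m) = a := by simp
  have hbe : ((e (e.symm ⟨b, hb⟩) : s) : Fin m) = b := by simp
  have h1 := rk_lt_rk s hs σ (e.symm ⟨a, ha⟩) (e.symm ⟨b, hb⟩)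
  have h2 := rk_lt_rk s hs σ' (e.symm ⟨a, ha⟩) (e.symm ⟨b, hb⟩)
  rw [hae, hbe] at h1 h2
  rw [← h1, ← h2]
  have := congrFun (congrArg (fun p => (p : Fin k₁ → Fin k₁)) (congrArg Equiv.toFun (congrArg id h)))
  constructor
  · intro hh
    have : rk s hs σ' (e.symm ⟨a, ha⟩) < rk s hs σ' (e.symm ⟨b, hb⟩) := by
      have e1 : rk s hs σ (e.symm ⟨a, ha⟩) = rk s hs σ' (e.symm ⟨a, ha⟩) := by
        rw [← rkPerm_apply, ← rkPerm_apply, h]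
      have e2 : rk s hs σ (e.symm ⟨b, hb⟩) = rk s hs σ' (e.symm ⟨b, hb⟩) := by
        rw [← rkPerm_apply, ← rkPerm_apply, h]
      rwa [e1, e2] at hh
    exact this
  · intro hh
    have e1 : rk s hs σ (e.symm ⟨a, ha⟩) = rk s hs σ' (e.symm ⟨a, ha⟩) := by
      rw [← rkPerm_apply, ← rkPerm_apply, h]
    have e2 : rk s hs σ (e.symm ⟨b, hb⟩) = rk s hs σ' (e.symm ⟨b, hb⟩) := by
      rw [← rkPerm_apply, ← rkPerm_apply, h]
    rwa [e1, e2]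

variable {m k₁ k₂ : ℕ} (s : Finset (Fin m)) (hs : s.card = k₁) (hsc : sᶜ.card = k₂)

/-- Permutation of `Fin m` acting as `γ₁` on `s` and `γ₂` on `sᶜ` (via the order isos). -/
noncomputable def extPerm (γ₁ : Equiv.Perm (Fin k₁)) (γ₂ : Equiv.Perm (Fin k₂)) :
    Equiv.Perm (Fin m) :=
  (Equiv.sumCompl (· ∈ s)).symm.trans
    (Equiv.trans
      (Equiv.sumCongr
        ((s.orderIsoOfFin hs).toEquiv.symm.trans (γ₁.trans (s.orderIsoOfFin hs).toEquiv))
        ((Equiv.subtypeEquivRight (fun x => (Finset.mem_compl (s := s) (a := x)).symm)).trans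
          (((sᶜ.orderIsoOfFin hsc).toEquiv.symm.trans
            (γ₂.trans (sᶜ.orderIsoOfFin hsc).toEquiv)).trans
          (Equiv.subtypeEquivRight (fun x => Finset.mem_compl (s := s) (a := x))))))
      (Equiv.sumCompl (· ∈ s)))

lemma extPerm_apply_mem (γ₁ : Equiv.Perm (Fin k₁)) (γ₂ : Equiv.Perm (Fin k₂))
    (x : Fin m) (hx : x ∈ s) :
    extPerm s hs hsc γ₁ γ₂ x =
      (s.orderIsoOfFin hs (γ₁ ((s.orderIsoOfFin hs).symm ⟨x, hx⟩)) : Fin m) := by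
  simp [extPerm, Equiv.sumCompl_symm_apply_of_pos hx]

lemma extPerm_apply_not_mem (γ₁ : Equiv.Perm (Fin k₁)) (γ₂ : Equiv.Perm (Fin k₂))
    (x : Fin m) (hx : x ∉ s) :
    extPerm s hs hsc γ₁ γ₂ x =
      (sᶜ.orderIsoOfFin hsc (γ₂ ((sᶜ.orderIsoOfFin hsc).symm ⟨x, Finset.mem_compl.2 hx⟩)) : Fin m) := by
  simp [extPerm, Equiv.sumCompl_symm_apply_of_neg hx, Equiv.subtypeEquivRight, Equiv.subtypeEquiv_apply]
  rfl

end Voter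

section Voter2
variable {m k₁ k₂ : ℕ} (s : Finset (Fin m)) (hs : s.card = k₁) (hsc : sᶜ.card = k₂)

lemma oiof_symm_congr {T T' : Finset (Fin m)} (h : T = T') {h1 : T.card = k₁}
    {h2 : T'.card = k₁} {x x' : Fin m} (hxx : x = x') (hx : x ∈ T) (hx' : x' ∈ T') :
    (T.orderIsoOfFin h1).symm ⟨x, hx⟩ = (T'.orderIsoOfFin h2).symm ⟨x', hx'⟩ := by
  subst h; subst hxx; rfl

lemma extPerm_image_s (γ₁ : Equiv.Perm (Fin k₁)) (γ₂ : Equiv.Perm (Fin k₂)) :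
    s.image (extPerm s hs hsc γ₁ γ₂) = s := by
  apply Finset.eq_of_subset_of_card_le
  · intro y hy
    rcases Finset.mem_image.1 hy with ⟨x, hx, rfl⟩
    rw [extPerm_apply_mem s hs hsc γ₁ γ₂ x hx]
    exact Finset.coe_mem _
  · rw [Finset.card_image_of_injective _ (extPerm s hs hsc γ₁ γ₂).injective]

lemma extPerm_image_sc (γ₁ : Equiv.Perm (Fin k₁)) (γ₂ : Equiv.Perm (Fin k₂)) :
    sᶜ.image (extPerm s hs hsc γ₁ γ₂) = sᶜ := by
  apply Finset.eq_of_subset_of_card_le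
  · intro y hy
    rcases Finset.mem_image.1 hy with ⟨x, hx, rfl⟩
    rw [extPerm_apply_not_mem s hs hsc γ₁ γ₂ x (Finset.mem_compl.1 hx)]
    exact Finset.coe_mem _
  · rw [Finset.card_image_of_injective _ (extPerm s hs hsc γ₁ γ₂).injective]

lemma extPerm_apply_oiof (γ₁ : Equiv.Perm (Fin k₁)) (γ₂ : Equiv.Perm (Fin k₂)) (i : Fin k₁) :
    extPerm s hs hsc γ₁ γ₂ (s.orderIsoOfFin hs i : Fin m) =
      (s.orderIsoOfFin hs (γ₁ i) : Fin m) := by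
  rw [extPerm_apply_mem s hs hsc γ₁ γ₂ _ (Finset.coe_mem _)]
  have h1 : ((s.orderIsoOfFin hs).symm ⟨((s.orderIsoOfFin hs) i : Fin m), Finset.coe_mem _⟩) = i := by
    have h2 : (⟨((s.orderIsoOfFin hs) i : Fin m), Finset.coe_mem _⟩ : {x // x ∈ s}) =
        (s.orderIsoOfFin hs) i := Subtype.ext rfl
    rw [h2, OrderIso.symm_apply_apply]
  rw [h1]

lemma extPerm_apply_oiof_c (γ₁ : Equiv.Perm (Fin k₁)) (γ₂ : Equiv.Perm (Fin k₂)) (j : Fin k₂) :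
    extPerm s hs hsc γ₁ γ₂ (sᶜ.orderIsoOfFin hsc j : Fin m) =
      (sᶜ.orderIsoOfFin hsc (γ₂ j) : Fin m) := by
  rw [extPerm_apply_not_mem s hs hsc γ₁ γ₂ _
    (Finset.mem_compl.1 (Finset.coe_mem _))]
  have h1 : ((sᶜ.orderIsoOfFin hsc).symm ⟨((sᶜ.orderIsoOfFin hsc) j : Fin m), Finset.mem_compl.2 (Finset.mem_compl.1 (Finset.coe_mem _))⟩) = j := by
    have h2 : (⟨((sᶜ.orderIsoOfFin hsc) j : Fin m), Finset.mem_compl.2 (Finset.mem_compl.1 (Finset.coe_mem _))⟩ : {x // x ∈ sᶜ}) =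
        (sᶜ.orderIsoOfFin hsc) j := Subtype.ext rfl
    rw [h2, OrderIso.symm_apply_apply]
  rw [h1]

lemma rkPerm_trans_left (γ₁ : Equiv.Perm (Fin k₁)) (γ₂ : Equiv.Perm (Fin k₂))
    (σ : Equiv.Perm (Fin m)) :
    rkPerm s hs ((extPerm s hs hsc γ₁ γ₂).trans σ) = γ₁.trans (rkPerm s hs σ) := by
  apply Equiv.ext
  intro i
  show rk s hs _ i = rk s hs σ (γ₁ i)
  unfold rk
  apply oiof_symm_congr
  · rw [show ⇑((extPerm s hs hsc γ₁ γ₂).trans σ) = ⇑σ ∘ ⇑(extPerm s hs hsc γ₁ γ₂) from rfl,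
      ← Finset.image_image, extPerm_image_s]
  · show σ (extPerm s hs hsc γ₁ γ₂ _) = _
    rw [extPerm_apply_oiof]

lemma rkPerm_trans_right (γ₁ : Equiv.Perm (Fin k₁)) (γ₂ : Equiv.Perm (Fin k₂))
    (σ : Equiv.Perm (Fin m)) :
    rkPerm sᶜ hsc ((extPerm s hs hsc γ₁ γ₂).trans σ) = γ₂.trans (rkPerm sᶜ hsc σ) := by
  apply Equiv.ext
  intro j
  show rk sᶜ hsc _ j = rk sᶜ hsc σ (γ₂ j)
  unfold rk
  apply oiof_symm_congr
  · rw [show ⇑((extPerm s hs hsc γ₁ γ₂).trans σ) = ⇑σ ∘ ⇑(extPerm s hs hsc γ₁ γ₂) from rfl,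
      ← Finset.image_image, extPerm_image_sc]
  · show σ (extPerm s hs hsc γ₁ γ₂ _) = _
    rw [extPerm_apply_oiof_c]

end Voter2

section Fiber
variable {m k₁ k₂ : ℕ} (s : Finset (Fin m)) (hs : s.card = k₁) (hsc : sᶜ.card = k₂)

noncomputable def r2 (σ : Equiv.Perm (Fin m)) :
    Equiv.Perm (Fin k₁) × Equiv.Perm (Fin k₂) :=
  (rkPerm s hs σ, rkPerm sᶜ hsc σ)

lemma fiber_card_le (p q : Equiv.Perm (Fin k₁) × Equiv.Perm (Fin k₂)) :
    (univ.filter fun σ => r2 s hs hsc σ = p).card ≤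
      (univ.filter fun σ => r2 s hs hsc σ = q).card := by
  set γ₁ := q.1.trans p.1.symm with hγ₁
  set γ₂ := q.2.trans p.2.symm with hγ₂
  apply Finset.card_le_card_of_injOn (fun σ => (extPerm s hs hsc γ₁ γ₂).trans σ)
  · intro σ hσ
    simp only [Finset.mem_coe, mem_filter, mem_univ, true_and] at hσ ⊢
    have h1 : (r2 s hs hsc σ).1 = p.1 := by rw [hσ]
    have h2 : (r2 s hs hsc σ).2 = p.2 := by rw [hσ]
    simp only [r2] at h1 h2
    have e1 : rkPerm s hs ((extPerm s hs hsc γ₁ γ₂).trans σ) = q.1 := by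
      rw [rkPerm_trans_left, h1, hγ₁]
      exact Equiv.ext fun i => by simp
    have e2 : rkPerm sᶜ hsc ((extPerm s hs hsc γ₁ γ₂).trans σ) = q.2 := by
      rw [rkPerm_trans_right, h2, hγ₂]
      exact Equiv.ext fun i => by simp
    simp [r2, e1, e2]
  · intro σ₁ _ σ₂ _ h
    apply Equiv.ext
    intro x
    have := congrArg
      (fun τ : Equiv.Perm (Fin m) => τ ((extPerm s hs hsc γ₁ γ₂).symm x)) h
    simpa using this

lemma fiber_card_eq (p q : Equiv.Perm (Fin k₁) × Equiv.Perm (Fin k₂)) :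
    (univ.filter fun σ => r2 s hs hsc σ = p).card =
      (univ.filter fun σ => r2 s hs hsc σ = q).card :=
  le_antisymm (fiber_card_le s hs hsc p q) (fiber_card_le s hs hsc q p)

end Fiber

section Count
variable {α β₁ β₂ : Type*} [Fintype α] [Fintype β₁] [Fintype β₂]

lemma bridge (p : α → Prop) (h : DecidablePred p) :
    (@Finset.filter _ p h univ).card = Nat.card {a // p a} := by
  letI := h
  rw [Nat.card_eq_fintype_card, Fintype.card_subtype]

lemma count_key [DecidableEq (β₁ × β₂)] (r : α → β₁ × β₂) (c : ℕ)
    (hc : ∀ p, (univ.filter fun a => r a = p).card = c)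
    (P : α → Prop) [DecidablePred P] (Q : β₁ × β₂ → Prop) (hPQ : ∀ a, P a ↔ Q (r a)) :
    (univ.filter P).card = (univ.filter Q).card * c := by
  have hfib : ∀ p, ((univ.filter P).filter fun a => r a = p).card = if Q p then c else 0 := by
    intro p
    split_ifs with hq
    · rw [Finset.filter_filter, ← hc p]
      congr 1
      apply Finset.filter_congr
      intro a _
      constructor
      · exact fun h => h.2
      · exact fun h => ⟨(hPQ a).2 (h ▸ hq), h⟩
    · rw [Finset.card_eq_zero, Finset.filter_eq_empty_iff]
      intro a ha hr
      exact hq (hr ▸ (hPQ a).1 (Finset.mem_filter.1 ha).2)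
  rw [Finset.card_eq_sum_card_fiberwise (f := r) (t := univ) (fun x _ => mem_univ _)]
  simp_rw [hfib]
  rw [← Finset.sum_filter, Finset.sum_const, smul_eq_mul]

lemma count_indep [DecidableEq (β₁ × β₂)] (r : α → β₁ × β₂) (c : ℕ)
    (hc : ∀ p, (univ.filter fun a => r a = p).card = c)
    (A B AB : α → Prop) [DecidablePred A] [DecidablePred B] [DecidablePred AB]
    (hAB : ∀ a, AB a ↔ A a ∧ B a)
    (hA : ∀ a a', (r a).1 = (r a').1 → A a → A a')
    (hB : ∀ a a', (r a).2 = (r a').2 → B a → B a') :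
    (univ.filter AB).card * Fintype.card α =
      (univ.filter A).card * (univ.filter B).card := by
  have hAiff : ∀ a, A a ↔ (fun b => ∃ a', (r a').1 = b ∧ A a') ((r a).1) := fun a =>
    ⟨fun h => ⟨a, rfl, h⟩, fun ⟨a', h1, h2⟩ => hA a' a h1 h2⟩
  have hBiff : ∀ a, B a ↔ (fun b => ∃ a', (r a').2 = b ∧ B a') ((r a).2) := fun a =>
    ⟨fun h => ⟨a, rfl, h⟩, fun ⟨a', h1, h2⟩ => hB a' a h1 h2⟩
  have e1 := count_key r c hc A (fun p => (fun b => ∃ a', (r a').1 = b ∧ A a') p.1)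
    (fun a => hAiff a)
  have e2 := count_key r c hc B (fun p => (fun b => ∃ a', (r a').2 = b ∧ B a') p.2)
    (fun a => hBiff a)
  have e3 := count_key r c hc AB
    (fun p => (fun b => ∃ a', (r a').1 = b ∧ A a') p.1 ∧ (fun b => ∃ a', (r a').2 = b ∧ B a') p.2)
    (fun a => (hAB a).trans (and_congr (hAiff a) (hBiff a)))
  have e4 := count_key r c hc (fun _ => True) (fun _ => True) (fun _ => Iff.rfl)
  rw [bridge (fun p : β₁ × β₂ => (fun b => ∃ a', (r a').1 = b ∧ A a') p.1) _] at e1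
  rw [bridge (fun p : β₁ × β₂ => (fun b => ∃ a', (r a').2 = b ∧ B a') p.2) _] at e2
  rw [bridge (fun p : β₁ × β₂ => (fun b => ∃ a', (r a').1 = b ∧ A a') p.1 ∧
    (fun b => ∃ a', (r a').2 = b ∧ B a') p.2) _] at e3
  rw [bridge (fun _ : α => True) _, bridge (fun _ : β₁ × β₂ => True) _] at e4
  have q1 : Nat.card {p : β₁ × β₂ // (fun b => ∃ a', (r a').1 = b ∧ A a') p.1} =
      Nat.card {b // ∃ a', (r a').1 = b ∧ A a'} * Fintype.card β₂ := by
    rw [← Nat.card_eq_fintype_card (α := β₂), ← Nat.card_prod]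
    exact Nat.card_congr
      ⟨fun x => (⟨x.1.1, x.2⟩, x.1.2), fun y => ⟨(y.1.1, y.2), y.1.2⟩,
        fun ⟨⟨a, b⟩, h⟩ => rfl, fun ⟨⟨a, h⟩, b⟩ => rfl⟩
  have q2 : Nat.card {p : β₁ × β₂ // (fun b => ∃ a', (r a').2 = b ∧ B a') p.2} =
      Nat.card {b // ∃ a', (r a').2 = b ∧ B a'} * Fintype.card β₁ := by
    rw [← Nat.card_eq_fintype_card (α := β₁), ← Nat.card_prod]
    exact Nat.card_congr
      ⟨fun x => (⟨x.1.2, x.2⟩, x.1.1), fun y => ⟨(y.2, y.1.1), y.1.2⟩,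
        fun ⟨⟨a, b⟩, h⟩ => rfl, fun ⟨⟨a, h⟩, b⟩ => rfl⟩
  have q3 : Nat.card {p : β₁ × β₂ // (fun b => ∃ a', (r a').1 = b ∧ A a') p.1 ∧
        (fun b => ∃ a', (r a').2 = b ∧ B a') p.2} =
      Nat.card {b // ∃ a', (r a').1 = b ∧ A a'} * Nat.card {b // ∃ a', (r a').2 = b ∧ B a'} := by
    rw [← Nat.card_prod]
    exact Nat.card_congr
      ⟨fun x => (⟨x.1.1, x.2.1⟩, ⟨x.1.2, x.2.2⟩), fun y => ⟨(y.1.1, y.2.1), y.1.2, y.2.2⟩,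
        fun ⟨⟨a, b⟩, h⟩ => rfl, fun ⟨⟨a, h⟩, ⟨b, h'⟩⟩ => rfl⟩
  have q4 : Nat.card {a : α // True} = Fintype.card α := by
    rw [← Nat.card_eq_fintype_card]
    exact Nat.card_congr (Equiv.subtypeUnivEquiv (fun _ => trivial))
  have q5 : Nat.card {p : β₁ × β₂ // True} = Fintype.card β₁ * Fintype.card β₂ := by
    rw [← Fintype.card_prod, ← Nat.card_eq_fintype_card]
    exact Nat.card_congr (Equiv.subtypeUnivEquiv (fun _ => trivial))
  rw [q1] at e1
  rw [q2] at e2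
  rw [q3] at e3
  rw [q4, q5] at e4
  rw [e1, e2, e3, e4]
  ring
end Count

section Profile
variable {m k₁ k₂ : ℕ} (s : Finset (Fin m)) (hs : s.card = k₁) (hsc : sᶜ.card = k₂) (n : ℕ)

lemma profile_fiber_natcard
    (P : (Fin n → Equiv.Perm (Fin k₁)) × (Fin n → Equiv.Perm (Fin k₂))) :
    Nat.card {x : Fin n → Equiv.Perm (Fin m) //
        ((fun i => rkPerm s hs (x i), fun i => rkPerm sᶜ hsc (x i)) = P)} =
      (Nat.card {σ : Equiv.Perm (Fin m) // r2 s hs hsc σ = (1, 1)}) ^ n := by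
  have he : {x : Fin n → Equiv.Perm (Fin m) //
        ((fun i => rkPerm s hs (x i), fun i => rkPerm sᶜ hsc (x i)) = P)} ≃
      ∀ i : Fin n, {σ : Equiv.Perm (Fin m) // r2 s hs hsc σ = (P.1 i, P.2 i)} := by
    refine (Equiv.subtypeEquivRight ?_).trans
      (Equiv.subtypePiEquivPi (p := fun i σ => r2 s hs hsc σ = (P.1 i, P.2 i)))
    intro x
    constructor
    · intro h i
      have h1 : (fun i => rkPerm s hs (x i)) = P.1 := congrArg Prod.fst h
      have h2 : (fun i => rkPerm sᶜ hsc (x i)) = P.2 := congrArg Prod.snd h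
      exact Prod.ext (congrFun h1 i) (congrFun h2 i)
    · intro h
      exact Prod.ext (funext fun i => congrArg Prod.fst (h i))
        (funext fun i => congrArg Prod.snd (h i))
  rw [Nat.card_congr he, Nat.card_pi]
  have hconst : ∀ i : Fin n,
      Nat.card {σ : Equiv.Perm (Fin m) // r2 s hs hsc σ = (P.1 i, P.2 i)} =
        Nat.card {σ : Equiv.Perm (Fin m) // r2 s hs hsc σ = (1, 1)} := by
    intro i
    rw [← bridge _ _, ← bridge _ _]
    exact fiber_card_eq s hs hsc _ _
  rw [Finset.prod_congr rfl (fun i _ => hconst i), Finset.prod_const, Finset.card_univ,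
    Fintype.card_fin]

end Profile

set_option maxHeartbeats 2000000 in
/-- For an IIA GSWF on `m₁ + m₂` alternatives and a partition of the alternatives into `S₁`
of size `m₁` and its complement `S₂`, the events that the restrictions to `S₁` and `S₂` have
no Generalized Condorcet Winner are independent, and the probability that `G` itself has no
GCW is at least the product of their probabilities. -/
theorem stmt16 (n m₁ m₂ : ℕ) (G : ProfileM n (m₁ + m₂) → Fin (m₁ + m₂) → Fin (m₁ + m₂) → Bool)
    (hIIA : ∀ x y : ProfileM n (m₁ + m₂), ∀ a b : Fin (m₁ + m₂),
      colM n (m₁ + m₂) x a b = colM n (m₁ + m₂) y a b → G x a b = G y a b)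
    (S₁ S₂ : Finset (Fin (m₁ + m₂))) (hS₁ : S₁.card = m₁) (hS₂ : S₂ = S₁ᶜ) :
    Prob n (m₁ + m₂) (fun x => NoGCWin n (m₁ + m₂) G S₁ x ∧ NoGCWin n (m₁ + m₂) G S₂ x) =
      Prob n (m₁ + m₂) (NoGCWin n (m₁ + m₂) G S₁) *
        Prob n (m₁ + m₂) (NoGCWin n (m₁ + m₂) G S₂) ∧
    Prob n (m₁ + m₂) (fun x => ¬ ∃ a : Fin (m₁ + m₂), ∀ b : Fin (m₁ + m₂),
        b ≠ a → G x a b = true) ≥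
      Prob n (m₁ + m₂) (NoGCWin n (m₁ + m₂) G S₁) *
        Prob n (m₁ + m₂) (NoGCWin n (m₁ + m₂) G S₂) := by
  subst hS₂
  have hsc : S₁ᶜ.card = m₂ := by
    rw [Finset.card_compl, Fintype.card_fin, hS₁, Nat.add_sub_cancel_left]
  set r : ProfileM n (m₁ + m₂) →
      (Fin n → Equiv.Perm (Fin m₁)) × (Fin n → Equiv.Perm (Fin m₂)) :=
    fun x => (fun i => rkPerm S₁ hS₁ (x i), fun i => rkPerm S₁ᶜ hsc (x i)) with hr
  have hA : ∀ x x' : ProfileM n (m₁ + m₂), (r x).1 = (r x').1 →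
      NoGCWin n (m₁ + m₂) G S₁ x → NoGCWin n (m₁ + m₂) G S₁ x' := by
    intro x x' h hx hex
    apply hx
    obtain ⟨a, ha, hall⟩ := hex
    refine ⟨a, ha, fun b hb hba => ?_⟩
    have hcol : colM n (m₁ + m₂) x a b = colM n (m₁ + m₂) x' a b := by
      funext i
      simp only [colM, PrefersM]
      refine decide_eq_decide.2 ?_
      exact rkPerm_compat S₁ hS₁ (x i) (x' i) (congrFun h i) a b ha hb
    rw [hIIA x x' a b hcol]
    exact hall b hb hba
  have hB : ∀ x x' : ProfileM n (m₁ + m₂), (r x).2 = (r x').2 →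
      NoGCWin n (m₁ + m₂) G S₁ᶜ x → NoGCWin n (m₁ + m₂) G S₁ᶜ x' := by
    intro x x' h hx hex
    apply hx
    obtain ⟨a, ha, hall⟩ := hex
    refine ⟨a, ha, fun b hb hba => ?_⟩
    have hcol : colM n (m₁ + m₂) x a b = colM n (m₁ + m₂) x' a b := by
      funext i
      simp only [colM, PrefersM]
      refine decide_eq_decide.2 ?_
      exact rkPerm_compat S₁ᶜ hsc (x i) (x' i) (congrFun h i) a b ha hb
    rw [hIIA x x' a b hcol]
    exact hall b hb hba
  have hc : ∀ p, (univ.filter fun x => r x = p).card =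
      (Nat.card {σ : Equiv.Perm (Fin (m₁ + m₂)) // r2 S₁ hS₁ hsc σ = (1, 1)}) ^ n := by
    intro p
    rw [bridge _ _]
    exact profile_fiber_natcard S₁ hS₁ hsc n p
  have hcount := count_indep r _ hc (NoGCWin n (m₁ + m₂) G S₁) (NoGCWin n (m₁ + m₂) G S₁ᶜ)
    (fun x => NoGCWin n (m₁ + m₂) G S₁ x ∧ NoGCWin n (m₁ + m₂) G S₁ᶜ x)
    (fun _ => Iff.rfl) hA hB
  rw [bridge _ _, bridge _ _, bridge _ _] at hcount
  have hN : (0 : ℝ) < (Fintype.card (ProfileM n (m₁ + m₂)) : ℝ) := by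
    exact_mod_cast Fintype.card_pos
  have hProb : ∀ p : ProfileM n (m₁ + m₂) → Prop,
      Prob n (m₁ + m₂) p =
        (Nat.card {x // p x} : ℝ) / (Fintype.card (ProfileM n (m₁ + m₂)) : ℝ) := by
    intro p
    unfold Prob
    rw [bridge p _]
  have hcast : (Nat.card {x : ProfileM n (m₁ + m₂) //
        NoGCWin n (m₁ + m₂) G S₁ x ∧ NoGCWin n (m₁ + m₂) G S₁ᶜ x} : ℝ) *
        (Fintype.card (ProfileM n (m₁ + m₂)) : ℝ) =
      (Nat.card {x // NoGCWin n (m₁ + m₂) G S₁ x} : ℝ) *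
        (Nat.card {x // NoGCWin n (m₁ + m₂) G S₁ᶜ x} : ℝ) := by
    exact_mod_cast hcount
  have hpart1 : Prob n (m₁ + m₂)
      (fun x => NoGCWin n (m₁ + m₂) G S₁ x ∧ NoGCWin n (m₁ + m₂) G S₁ᶜ x) =
      Prob n (m₁ + m₂) (NoGCWin n (m₁ + m₂) G S₁) *
        Prob n (m₁ + m₂) (NoGCWin n (m₁ + m₂) G S₁ᶜ) := by
    rw [hProb, hProb, hProb, div_mul_div_comm, div_eq_div_iff hN.ne' (by positivity)]
    linear_combination (Fintype.card (ProfileM n (m₁ + m₂)) : ℝ) * hcast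
  refine ⟨hpart1, ?_⟩
  rw [← hpart1, hProb, hProb, ge_iff_le]
  have hle : Nat.card {x : ProfileM n (m₁ + m₂) //
        NoGCWin n (m₁ + m₂) G S₁ x ∧ NoGCWin n (m₁ + m₂) G S₁ᶜ x} ≤
      Nat.card {x : ProfileM n (m₁ + m₂) //
        ¬ ∃ a : Fin (m₁ + m₂), ∀ b : Fin (m₁ + m₂), b ≠ a → G x a b = true} := by
    apply Nat.card_mono (Set.toFinite _)
    intro x hx
    obtain ⟨h1, h2⟩ := hx
    intro hex
    obtain ⟨a, hall⟩ := hex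
    by_cases ha : a ∈ S₁
    · exact h1 ⟨a, ha, fun b _ hb => hall b hb⟩
    · exact h2 ⟨a, Finset.mem_compl.2 ha, fun b _ hb => hall b hb⟩
  gcongr
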